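/- arXiv:2311.09045 — 2 statements merged into one kernel-verified Lean document; each statement's English description precedes it below -/
import Mathlib

section
/- For nonnegative integers a and b and a real (or rational) variable z avoiding poles, the infinite sum ∑_{t=a}^{∞} (b+t)_{2t}/(z+t)_{2t+2} converges and equals (b+a)_{2a} / ((z+b)·(z+a-1)_{2a}·(z-b-1)). In particular, since (b+t)_{2t} = 0 for t > b, the sum is actually the finite sum ∑_{t=a}^{b}. -/
/-- Falling factorial `(a)_k = a(a-1)⋯(a-k+1)`. -/
noncomputable def ff {R : Type*} [CommRing R] (a : R) (k : ℕ) : R :=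
  ∏ j ∈ Finset.range k, (a - (j : R))

lemma ff_nat_zero (n k : ℕ) (h : n < k) : ff (n:ℝ) k = 0 :=
  Finset.prod_eq_zero (Finset.mem_range.2 h) (by simp)

lemma ff_succ (x : ℝ) (k : ℕ) : ff x (k+1) = ff x k * (x - k) :=
  Finset.prod_range_succ _ _

lemma ff_succ' (x : ℝ) (k : ℕ) : ff x (k+1) = x * ff (x-1) k := by
  rw [ff, Finset.prod_range_succ']
  simp only [Nat.cast_zero, sub_zero]
  rw [mul_comm, ff]
  congr 1
  refine Finset.prod_congr rfl fun j _ => ?_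
  push_cast; ring

lemma ff_two (x : ℝ) (k : ℕ) : ff x (k+2) = x * ff (x-1) k * (x - (k+1)) := by
  rw [ff_succ, ff_succ']; push_cast; ring

lemma ff_two' (x : ℝ) (k : ℕ) : ff (x+1) (k+2) = (x+1) * ff x k * (x - k) := by
  rw [ff_two, show x+1-1 = x from by ring]; push_cast; ring

lemma key (b : ℕ) (z : ℝ) (h1 : z + b ≠ 0) (h2 : z - b - 1 ≠ 0) :
    ∀ d a : ℕ, b + 1 ≤ a + d →
    (∀ t : ℕ, a ≤ t → t ≤ b → ff (z + t) (2*t+2) ≠ 0) →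
    ff (z + a - 1) (2*a) ≠ 0 →
    ∑ t ∈ Finset.Icc a b, ff ((b:ℝ) + t) (2*t) / ff (z + t) (2*t+2) =
      ff ((b:ℝ) + a) (2*a) / ((z + b) * ff (z + a - 1) (2*a) * (z - b - 1)) := by
  intro d
  induction d with
  | zero =>
    intro a hd _ _
    rw [Finset.Icc_eq_empty (by omega), Finset.sum_empty,
      show ((b:ℝ) + a) = ((b+a : ℕ) : ℝ) by push_cast; ring,
      ff_nat_zero _ _ (by omega), zero_div]
  | succ d ih =>
    intro a hd hden h3
    by_cases hab : a ≤ b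
    · -- split off the first term
      have hsplit : ∑ t ∈ Finset.Icc a b, ff ((b:ℝ) + t) (2*t) / ff (z + t) (2*t+2)
          = ff ((b:ℝ) + a) (2*a) / ff (z + a) (2*a+2)
            + ∑ t ∈ Finset.Icc (a+1) b, ff ((b:ℝ) + t) (2*t) / ff (z + t) (2*t+2) := by
        rw [← Finset.add_sum_erase _ _ (Finset.mem_Icc.2 ⟨le_rfl, hab⟩),
          Finset.Icc_erase_left, Finset.Icc_add_one_left_eq_Ioc]
      have hA : ff (z + (a:ℝ)) (2*a+2) = (z + a) * ff (z + a - 1) (2*a) * (z - a - 1) := by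
        rw [show z + (a:ℝ) = (z + a - 1) + 1 by ring, ff_two']
        push_cast; ring
      have hA0 : (z + (a:ℝ)) * ff (z + a - 1) (2*a) * (z - a - 1) ≠ 0 :=
        hA ▸ hden a le_rfl hab
      have hz1 : z + (a:ℝ) ≠ 0 := left_ne_zero_of_mul (left_ne_zero_of_mul hA0)
      have hG : ff (z + (a:ℝ) - 1) (2*a) ≠ 0 := right_ne_zero_of_mul (left_ne_zero_of_mul hA0)
      have hz2 : z - (a:ℝ) - 1 ≠ 0 := right_ne_zero_of_mul hA0
      have hB : ff ((b:ℝ) + (a+1:ℕ)) (2*(a+1))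
          = ((b:ℝ) + a + 1) * ff ((b:ℝ) + a) (2*a) * ((b:ℝ) - a) := by
        rw [show ((b:ℝ) + (a+1:ℕ)) = ((b:ℝ) + a) + 1 by push_cast; ring,
          show 2*(a+1) = 2*a+2 by ring, ff_two']
        push_cast; ring
      have hC : ff (z + ((a+1:ℕ):ℝ) - 1) (2*(a+1)) = ff (z + a) (2*a+2) := by
        rw [show z + ((a+1:ℕ):ℝ) - 1 = z + a by push_cast; ring,
          show 2*(a+1) = 2*a+2 by ring]
      have ih' := ih (a+1) (by omega) (fun t ht1 ht2 => hden t (by omega) ht2)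
        (by rw [hC, hA]; exact hA0)
      rw [hsplit, ih', hB, hC, hA]
      field_simp
      ring
    · rw [Finset.Icc_eq_empty (by omega), Finset.sum_empty,
        show ((b:ℝ) + a) = ((b+a : ℕ) : ℝ) by push_cast; ring,
        ff_nat_zero _ _ (by omega), zero_div]

lemma term_zero (b s : ℕ) (z : ℝ) (h : b < s) :
    ff ((b:ℝ) + s) (2*s) / ff (z + s) (2*s+2) = 0 := by
  rw [show ((b:ℝ) + s) = ((b+s : ℕ) : ℝ) by push_cast; ring,
    ff_nat_zero _ _ (by omega), zero_div]

theorem stmt2 (a b : ℕ) (z : ℝ)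
    (hden : ∀ t : ℕ, a ≤ t → t ≤ b → ff (z + t) (2*t+2) ≠ 0)
    (h1 : z + b ≠ 0) (h2 : z - b - 1 ≠ 0) (h3 : ff (z + a - 1) (2*a) ≠ 0) :
    HasSum (fun t : ℕ => ff ((b:ℝ) + (a + t)) (2*(a+t)) / ff (z + (a + t)) (2*(a+t)+2))
        (ff ((b:ℝ) + a) (2*a) / ((z + b) * ff (z + a - 1) (2*a) * (z - b - 1))) ∧
      ∑ t ∈ Finset.Icc a b, ff ((b:ℝ) + t) (2*t) / ff (z + t) (2*t+2) =
        ff ((b:ℝ) + a) (2*a) / ((z + b) * ff (z + a - 1) (2*a) * (z - b - 1)) := by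
  have hfin := key b z h1 h2 (b + 1 - a) a (by omega) hden h3
  have hcast : ∀ t : ℕ, ((b:ℝ) + (a + t)) = ((b:ℝ) + ((a+t : ℕ) : ℝ)) ∧
      (z + ((a:ℝ) + t)) = z + ((a+t : ℕ) : ℝ) := by
    intro t; constructor <;> push_cast <;> ring
  refine ⟨?_, hfin⟩
  have hvanish : ∀ t : ℕ, t ∉ Finset.range (b+1) →
      ff ((b:ℝ) + (a + t)) (2*(a+t)) / ff (z + (a + t)) (2*(a+t)+2) = 0 := by
    intro t ht
    rw [Finset.mem_range, not_lt] at ht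
    rw [(hcast t).1, (hcast t).2]
    exact term_zero b (a+t) z (by omega)
  have hs := hasSum_sum_of_ne_finset_zero (L := SummationFilter.unconditional ℕ) (s := Finset.range (b+1)) hvanish
  convert hs using 1
  rw [← hfin]
  have hc : ∀ t ∈ Finset.range (b+1),
      ff ((b:ℝ) + (a + t)) (2*(a+t)) / ff (z + (a + t)) (2*(a+t)+2)
        = ff ((b:ℝ) + ((a+t : ℕ):ℝ)) (2*(a+t)) / ff (z + ((a+t : ℕ):ℝ)) (2*(a+t)+2) := by
    intro t _; rw [(hcast t).1, (hcast t).2]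
  rw [Finset.sum_congr rfl hc]
  have hrange := Finset.sum_Ico_eq_sum_range
    (f := fun s => ff ((b:ℝ) + s) (2*s) / ff (z + s) (2*s+2)) (m := a) (n := a + b + 1)
  rw [show a + b + 1 - a = b + 1 by omega] at hrange
  rw [← hrange, ← Finset.Ico_add_one_right_eq_Icc]
  apply Finset.sum_subset (Finset.Ico_subset_Ico_right (by omega))
  intro s hs1 hs2
  simp only [Finset.mem_Ico, Nat.succ_eq_add_one, not_and, not_lt] at hs1 hs2
  exact term_zero b s z (by omega)
end

section
/- For nonnegative integers i, m and every integer k with 0 ≤ k < m, the deformed polynomial vanishes at (x,y) = (−1/2−k, k−m+1/2): F~_i^m(−1/2−k, k−m+1/2) = 0. -/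
noncomputable def Rr (a : ℚ) (n : ℕ) : ℚ := ∏ j ∈ Finset.range n, (a + (j : ℚ))

lemma Rr_congr {a b : ℚ} (n : ℕ) (h : a = b) : Rr a n = Rr b n := by rw [h]

lemma Rr_zero (a : ℚ) : Rr a 0 = 1 := by simp [Rr]

lemma Rr_succ (a : ℚ) (n : ℕ) : Rr a (n+1) = Rr a n * (a + n) := Finset.prod_range_succ _ _

lemma Rr_succ' (a : ℚ) (n : ℕ) : Rr a (n+1) = a * Rr (a+1) n := by
  rw [Rr, Finset.prod_range_succ', Rr, mul_comm]
  congr 1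
  · norm_num
  · exact Finset.prod_congr rfl fun j _ => by push_cast; ring

lemma Rr_add (a : ℚ) (p q : ℕ) : Rr a (p+q) = Rr a p * Rr (a+p) q := by
  rw [Rr, Finset.prod_range_add, Rr, Rr]
  congr 1
  exact Finset.prod_congr rfl fun j _ => by push_cast; ring

lemma Rr_pos {a : ℚ} (ha : 0 < a) (n : ℕ) : 0 < Rr a n :=
  Finset.prod_pos fun j _ => by have : (0:ℚ) ≤ j := Nat.cast_nonneg j; linarith

lemma ff_neg (a : ℚ) (n : ℕ) : ff a n = (-1)^n * Rr (-a) n := by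
  rw [ff, Rr]
  calc ∏ j ∈ Finset.range n, (a - (j:ℚ))
      = ∏ j ∈ Finset.range n, ((-1) * (-a + (j:ℚ))) :=
        Finset.prod_congr rfl fun j _ => by ring
    _ = (-1)^n * ∏ j ∈ Finset.range n, (-a + (j:ℚ)) := by
        rw [Finset.prod_mul_distrib, Finset.prod_const, Finset.card_range]
  
lemma ff_reflect (a : ℚ) (n : ℕ) : ff a n = Rr (a - n + 1) n := by
  rw [Rr, ← Finset.prod_range_reflect, ff]
  refine Finset.prod_congr rfl fun j hj => ?_
  have hj' : j < n := Finset.mem_range.mp hj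
  have : ((n - 1 - j : ℕ) : ℚ) = (n : ℚ) - 1 - j := by
    have h1 : 1 + j ≤ n := by omega
    push_cast [Nat.sub_sub, Nat.cast_sub h1]
    ring
  rw [this]; ring

lemma ff_split (a : ℚ) (p q : ℕ) : ff a (p+q) = ff a p * ff (a - p) q := by
  rw [ff, Finset.prod_range_add, ff, ff]
  congr 1
  exact Finset.prod_congr rfl fun j _ => by push_cast; ring

lemma ff_half (n : ℕ) : ff ((n:ℚ) - 1/2) n = Rr (1/2) n := by
  rw [ff_reflect]; exact Rr_congr _ (by ring)

noncomputable def Fm (m u : ℕ) (a b c : ℚ) : ℚ :=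
  (-1)^u * (m.choose u : ℚ) * Rr a u * Rr b u * Rr (c + u) (m - u)
    * Rr (1 + a + b - c - m + u) (m - u)

noncomputable def Gh (m u : ℕ) (a b c : ℚ) : ℚ :=
  (-1)^(u+1) * ((m+1).choose u : ℚ) * u * (u + c - 1) * (u + (1+a+b-c-(m:ℚ)) - 1)
    * Rr a u * Rr b u * Rr (c + u) (m - u) * Rr ((1+a+b-c-(m:ℚ)) + u) (m - u)

lemma cert (m u : ℕ) (hu : u < m) (a b c : ℚ) :
    ((m:ℚ)+1) * Fm (m+1) u a b c
      + ((m:ℚ)+1) * ((c-a+m)*(c-b+m)) * Fm m u a b c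
      = Gh m (u+1) a b c - Gh m u a b c := by
  obtain ⟨w, rfl⟩ : ∃ w, m = u + w + 1 := ⟨m - u - 1, by omega⟩
  simp only [Fm, Gh]
  -- natural subtraction rewrites
  rw [show u + w + 1 + 1 - u = w + 2 from by omega,
      show u + w + 1 - u = w + 1 from by omega,
      show u + w + 1 - (u + 1) = w from by omega]
  -- choose relations
  have h1 : (((u+w+1).choose (u+1)):ℚ) * (u+1) = (((u+w+1).choose u):ℚ) * (w+1) := by
    have := Nat.choose_succ_right_eq (u+w+1) u
    rw [show u + w + 1 - u = w + 1 from by omega] at this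
    exact_mod_cast congrArg (Nat.cast (R := ℚ)) this
  have h2 : (((u+w+2).choose (u+1)):ℚ) = ((u+w+1).choose u) + ((u+w+1).choose (u+1)) := by
    rw [show u+w+2 = (u+w+1)+1 from by omega]
    exact_mod_cast congrArg (Nat.cast (R := ℚ)) (Nat.choose_succ_succ (u+w+1) u)
  have h3 : (((u+w+2).choose (u+1)):ℚ) * (u+1) = (((u+w+2).choose u):ℚ) * (w+2) := by
    have := Nat.choose_succ_right_eq (u+w+2) u
    rw [show u + w + 2 - u = w + 2 from by omega] at this
    exact_mod_cast congrArg (Nat.cast (R := ℚ)) this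
  have hu1 : ((u:ℚ)+1) ≠ 0 := by positivity
  have hw2 : ((w:ℚ)+2) ≠ 0 := by positivity
  have e1 : (((u+w+1).choose (u+1)):ℚ) = (((u+w+1).choose u):ℚ) * (w+1) / (u+1) := by
    field_simp; linarith [h1]
  have e3 : (((u+w+2).choose (u+1)):ℚ) = (((u+w+1).choose u):ℚ) * ((u:ℚ)+(w:ℚ)+2) / (u+1) := by
    rw [h2, e1]; field_simp; ring
  have e2 : (((u+w+2).choose u):ℚ) = (((u+w+1).choose u):ℚ) * ((u:ℚ)+(w:ℚ)+2) / (w+2) := by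
    rw [e3] at h3; field_simp at h3 ⊢; linarith [h3]
  rw [e2, e3]
  push_cast
  rw [show (w:ℕ)+2 = (w+1)+1 from rfl]
  rw [Rr_succ' (c + (u:ℚ)) (w+1), Rr_succ (c + (u:ℚ) + 1) w, Rr_succ' (c + (u:ℚ)) w]
  rw [Rr_succ' (1+a+b-c-((u:ℚ)+(w:ℚ)+1+1)+(u:ℚ)) (w+1)]
  rw [Rr_congr (w+1) (show (1+a+b-c-((u:ℚ)+(w:ℚ)+1+1)+(u:ℚ))+1
        = 1+a+b-c-((u:ℚ)+(w:ℚ)+1)+(u:ℚ) by ring)]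
  rw [Rr_succ' (1+a+b-c-((u:ℚ)+(w:ℚ)+1)+(u:ℚ)) w]
  rw [Rr_congr w (show 1+a+b-c-((u:ℚ)+(w:ℚ)+1)+((u:ℚ)+1)
        = (1+a+b-c-((u:ℚ)+(w:ℚ)+1)+(u:ℚ))+1 by ring)]
  rw [Rr_congr w (show c+((u:ℚ)+1) = c+(u:ℚ)+1 by ring)]
  rw [Rr_succ a u, Rr_succ b u]
  field_simp
  ring

lemma boundary (m : ℕ) (a b c : ℚ) :
    Gh m m a b c + ((m:ℚ)+1) * ((c-a+m)*(c-b+m)) * Fm m m a b c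
      + ((m:ℚ)+1) * Fm (m+1) m a b c + ((m:ℚ)+1) * Fm (m+1) (m+1) a b c = 0 := by
  simp only [Fm, Gh, Nat.sub_self, Nat.add_sub_cancel_left,
    show m + 1 - m = 1 from by omega, Nat.choose_self, Nat.choose_succ_self_right]
  rw [show (1:ℕ) = 0 + 1 from rfl, Rr_succ, Rr_succ, Rr_succ a m, Rr_succ b m]
  simp only [Rr_zero]
  push_cast
  ring

theorem saal (a b c : ℚ) : ∀ m : ℕ,
    ∑ u ∈ Finset.range (m+1), Fm m u a b c = (-1)^m * Rr (c-a) m * Rr (c-b) m := by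
  intro m
  induction m with
  | zero => simp [Fm, Rr_zero]
  | succ m ih =>
    have hm1 : ((m:ℚ)+1) ≠ 0 := by positivity
    have key : ((m:ℚ)+1) * ∑ u ∈ Finset.range (m+2), Fm (m+1) u a b c
        = ((m:ℚ)+1) * (-((c-a+m)*(c-b+m)) * ∑ u ∈ Finset.range (m+1), Fm m u a b c) := by
      rw [Finset.mul_sum]
      rw [Finset.sum_range_succ, Finset.sum_range_succ]
      have step : ∑ u ∈ Finset.range m, ((m:ℚ)+1) * Fm (m+1) u a b c
          = ∑ u ∈ Finset.range m, ((Gh m (u+1) a b c - Gh m u a b c)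
              - ((m:ℚ)+1) * ((c-a+m)*(c-b+m)) * Fm m u a b c) := by
        refine Finset.sum_congr rfl fun u hu => ?_
        have := cert m u (Finset.mem_range.mp hu) a b c
        linarith [this]
      rw [step, Finset.sum_sub_distrib, Finset.sum_range_sub (fun u => Gh m u a b c)]
      have hGh0 : Gh m 0 a b c = 0 := by simp [Gh]
      have hS : ∑ u ∈ Finset.range m, ((m:ℚ)+1) * ((c-a+m)*(c-b+m)) * Fm m u a b c
          = ((m:ℚ)+1) * ((c-a+m)*(c-b+m)) * (∑ u ∈ Finset.range (m+1), Fm m u a b c)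
              - ((m:ℚ)+1) * ((c-a+m)*(c-b+m)) * Fm m m a b c := by
        rw [Finset.sum_range_succ, ← Finset.mul_sum]; ring
      rw [hGh0, hS]
      have hbd := boundary m a b c
      linear_combination hbd
    have := mul_left_cancel₀ hm1 key
    rw [this, ih]
    rw [Rr_succ (c-a) m, Rr_succ (c-b) m]
    ring

lemma ff_congr {a b : ℚ} (n : ℕ) (h : a = b) : ff a n = ff b n := by rw [h]

lemma keyterm (i m k u : ℕ) (hk : k < m) (hu : u ≤ m) :
    (m.choose u : ℚ) * (-1)^u * (m.factorial : ℚ) / ff ((m:ℚ) + i + u + 1/2) (m+1)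
      * ff ((-1/2 - (k:ℚ)) + m + i + u) (2*m+2*i+2*u+1)
      * ff (((k:ℚ) - m + 1/2) + m + i) (m-u)
      * ff (((k:ℚ) - m + 1/2) - i - u - 1) (m-u)
    = ( ((-1):ℚ)^(m+i+k+1) * (-1)^m * (m.factorial : ℚ) * Rr (1/2) (m+i+k+1)
          * Rr (1/2) (2*m+i-k) / Rr ((i:ℚ)+1/2) (2*m+1) )
      * Fm m u ((i:ℚ)+1/2) ((m:ℚ)+(i:ℚ)+(k:ℚ)+3/2) ((m:ℚ)+(i:ℚ)+3/2) := by
  obtain ⟨v, rfl⟩ : ∃ v, m = u + v := ⟨m - u, by omega⟩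
  rw [show u + v - u = v from by omega]
  have hden : ff (((u+v:ℕ):ℚ) + i + u + 1/2) (u+v+1) = Rr ((i:ℚ)+(u:ℚ)+1/2) (u+v+1) := by
    rw [ff_reflect]; exact Rr_congr _ (by push_cast; ring)
  have hL : Rr ((i:ℚ)+1/2) (2*(u+v)+1)
      = Rr ((i:ℚ)+1/2) u * Rr ((i:ℚ)+(u:ℚ)+1/2) (u+v+1) * Rr (((u+v:ℕ):ℚ)+(i:ℚ)+3/2+(u:ℚ)) v := by
    rw [show 2*(u+v)+1 = u + ((u+v+1) + v) from by omega, Rr_add, Rr_add]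
    rw [Rr_congr (u+v+1) (show (i:ℚ)+1/2+(u:ℚ) = (i:ℚ)+(u:ℚ)+1/2 from by ring)]
    rw [Rr_congr v (show (i:ℚ)+1/2+(u:ℚ)+((u+v+1:ℕ):ℚ) = ((u+v:ℕ):ℚ)+(i:ℚ)+3/2+(u:ℚ) from by
          push_cast; ring)]
    ring
  have hn1 : k ≤ u + v + i + u := by omega
  have hcast : ((u+v+i+u-k : ℕ):ℚ) = ((u+v:ℕ):ℚ)+(i:ℚ)+(u:ℚ)-(k:ℚ) := by
    rw [Nat.cast_sub hn1]; push_cast; ring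
  have hx : ff ((-1/2 - (k:ℚ)) + ((u+v:ℕ):ℚ) + i + u) (2*(u+v)+2*i+2*u+1)
      = Rr (1/2) (u+v+i+u-k) * ((-1)^(u+v+i+u+k+1) * Rr (1/2) (u+v+i+u+k+1)) := by
    rw [ff_congr _ (show (-1/2 - (k:ℚ)) + ((u+v:ℕ):ℚ) + i + u = ((u+v+i+u-k:ℕ):ℚ) - 1/2 from by
          rw [hcast]; ring)]
    rw [show 2*(u+v)+2*i+2*u+1 = (u+v+i+u-k) + (u+v+i+u+k+1) from by omega, ff_split, ff_half]
    congr 1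
    rw [ff_congr _ (show ((u+v+i+u-k:ℕ):ℚ) - 1/2 - ((u+v+i+u-k:ℕ):ℚ) = -(1/2) from by ring)]
    rw [ff_neg]
    rw [Rr_congr _ (show -(-(1/2:ℚ)) = 1/2 from by norm_num)]
  have hb : Rr (1/2) (u+v+i+u+k+1)
      = Rr (1/2) (u+v+i+k+1) * Rr (((u+v:ℕ):ℚ)+(i:ℚ)+(k:ℚ)+3/2) u := by
    rw [show u+v+i+u+k+1 = (u+v+i+k+1) + u from by omega, Rr_add]
    rw [Rr_congr u (show (1/2:ℚ)+((u+v+i+k+1:ℕ):ℚ) = ((u+v:ℕ):ℚ)+(i:ℚ)+(k:ℚ)+3/2 from by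
          push_cast; ring)]
  have hy1 : ff (((k:ℚ) - ((u+v:ℕ):ℚ) + 1/2) + ((u+v:ℕ):ℚ) + i) v
      = Rr (1 + ((i:ℚ)+1/2) + (((u+v:ℕ):ℚ)+(i:ℚ)+(k:ℚ)+3/2) - (((u+v:ℕ):ℚ)+(i:ℚ)+3/2)
          - ((u+v:ℕ):ℚ) + (u:ℚ)) v := by
    rw [ff_reflect]
    refine Rr_congr _ ?_
    push_cast; ring
  have hy2 : ff (((k:ℚ) - ((u+v:ℕ):ℚ) + 1/2) - i - u - 1) v
      = (-1)^v * Rr (((u+v+i+u-k:ℕ):ℚ)+1/2) v := by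
    rw [ff_neg]
    rw [Rr_congr _ (show -(((k:ℚ) - ((u+v:ℕ):ℚ) + 1/2) - i - u - 1)
          = ((u+v+i+u-k:ℕ):ℚ)+1/2 from by rw [hcast]; push_cast; ring)]
  have hD : Rr (1/2) (u+v+i+u-k) * Rr (((u+v+i+u-k:ℕ):ℚ)+1/2) v = Rr (1/2) (2*(u+v)+i-k) := by
    rw [show 2*(u+v)+i-k = (u+v+i+u-k) + v from by omega, Rr_add]
    rw [Rr_congr v (show (1/2:ℚ)+((u+v+i+u-k:ℕ):ℚ) = ((u+v+i+u-k:ℕ):ℚ)+1/2 from by ring)]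
  have hp1 : (0:ℚ) < Rr ((i:ℚ)+(u:ℚ)+1/2) (u+v+1) := Rr_pos (by positivity) _
  have hp2 : (0:ℚ) < Rr ((i:ℚ)+1/2) u := Rr_pos (by positivity) _
  have hp3 : (0:ℚ) < Rr (((u+v:ℕ):ℚ)+(i:ℚ)+3/2+(u:ℚ)) v := Rr_pos (by positivity) _
  have hp0 : (0:ℚ) < Rr ((i:ℚ)+1/2) (2*(u+v)+1) := Rr_pos (by positivity) _
  rw [hden, hx, hb, hy1, hy2, Fm]
  rw [show u + v - u = v from by omega]
  rw [div_mul_eq_mul_div, div_mul_eq_mul_div, div_mul_eq_mul_div, div_mul_eq_mul_div]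
  rw [div_eq_div_iff hp1.ne' hp0.ne']
  rw [hL, ← hD]
  ring

/-- `f2 i m x y = 2·F̃ᵢᵐ(x,y)`, twice the deformed polynomial of Feigin–Wang–Yoshinaga. -/
noncomputable def f2 (i m : ℕ) (x y : ℚ) : ℚ :=
  ∑ u ∈ Finset.range (m+1),
    (m.choose u : ℚ) * (-1)^u * (m.factorial : ℚ) / ff ((m:ℚ) + i + u + 1/2) (m+1)
      * ff (x + m + i + u) (2*m+2*i+2*u+1) * ff (y + m + i) (m-u) * ff (y - i - u - 1) (m-u)

/-- `Ft i m x y = F̃ᵢᵐ(x,y)`. -/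
noncomputable def Ft (i m : ℕ) (x y : ℚ) : ℚ := f2 i m x y / 2

theorem stmt6 (i m k : ℕ) (hk : k < m) :
    Ft i m (-1/2 - (k:ℚ)) ((k:ℚ) - m + 1/2) = 0 := by
  rw [Ft, f2]
  have hsum : ∑ u ∈ Finset.range (m+1),
      ((m.choose u : ℚ) * (-1)^u * (m.factorial : ℚ) / ff ((m:ℚ) + i + u + 1/2) (m+1)
        * ff ((-1/2 - (k:ℚ)) + m + i + u) (2*m+2*i+2*u+1)
        * ff (((k:ℚ) - m + 1/2) + m + i) (m-u)
        * ff (((k:ℚ) - m + 1/2) - i - u - 1) (m-u))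
      = ∑ u ∈ Finset.range (m+1),
        ( ((-1):ℚ)^(m+i+k+1) * (-1)^m * (m.factorial : ℚ) * Rr (1/2) (m+i+k+1)
            * Rr (1/2) (2*m+i-k) / Rr ((i:ℚ)+1/2) (2*m+1) )
          * Fm m u ((i:ℚ)+1/2) ((m:ℚ)+(i:ℚ)+(k:ℚ)+3/2) ((m:ℚ)+(i:ℚ)+3/2) :=
    Finset.sum_congr rfl fun u hu =>
      keyterm i m k u hk (by have := Finset.mem_range.mp hu; omega)
  rw [hsum, ← Finset.mul_sum, saal]
  have hz : Rr (((m:ℚ)+(i:ℚ)+3/2) - ((m:ℚ)+(i:ℚ)+(k:ℚ)+3/2)) m = 0 := by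
    rw [Rr_congr m (show ((m:ℚ)+(i:ℚ)+3/2) - ((m:ℚ)+(i:ℚ)+(k:ℚ)+3/2) = -(k:ℚ) from by ring)]
    rw [Rr]
    exact Finset.prod_eq_zero (Finset.mem_range.mpr hk) (by ring)
  rw [hz]
  ring
end
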